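/- Let X be a set equipped with an extended pseudo-distance d : X × X → [0,∞], let A ⊆ X be nonempty, and let f : X → ℝ be bounded on A (f''A is bounded above and below) and satisfy f(x) = f(y) whenever x, y ∈ A and d(x,y) < ∞ (i.e. f is constant on each d-accessible component of A; this is the meaning of 'f has d-Lipschitz constant 0' under the paper's convention 0·∞ := ∞). Then there exist functions g_min, g_max : X → ℝ such that: (i) g_min = f = g_max on A, and inf_A f ≤ g_min ≤ g_max ≤ sup_A f on X; (ii) both g_min and g_max are constant on each d-accessible component of X, i.e. g(x) = g(y) whenever d(x,y) < ∞; (iii) every h : X → ℝ satisfying h = f on A, inf_A f ≤ h ≤ sup_A f on X, and h(x) = h(y) whenever d(x,y) < ∞, satisfies g_min ≤ h ≤ g_max pointwise. -/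

import Mathlib

open scoped ENNReal

/-- Degenerate case `L = 0` of the constrained McShane extension Lemma (Lemma 3.2):
a bounded function on `A` that is constant on each `d`-accessible component of `A`
admits a minimal and a maximal constrained extension constant on each
`d`-accessible component of `X`. -/
theorem mcShane_degenerate {X : Type*} (d : X → X → ℝ≥0∞)
    (hrefl : ∀ x, d x x = 0)
    (hsymm : ∀ x y, d x y = d y x)
    (htri : ∀ x y z, d x z ≤ d x y + d y z)
    (A : Set X) (hA : A.Nonempty)
    (f : X → ℝ)
    (hbddA : BddAbove (f '' A)) (hbddB : BddBelow (f '' A))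
    (hconst : ∀ x ∈ A, ∀ y ∈ A, d x y < ⊤ → f x = f y) :
    ∃ gmin gmax : X → ℝ,
      (∀ x ∈ A, gmin x = f x ∧ gmax x = f x) ∧
      (∀ x : X, sInf (f '' A) ≤ gmin x ∧ gmin x ≤ gmax x ∧ gmax x ≤ sSup (f '' A)) ∧
      (∀ x y : X, d x y < ⊤ → gmin x = gmin y) ∧
      (∀ x y : X, d x y < ⊤ → gmax x = gmax y) ∧
      (∀ h : X → ℝ, (∀ x ∈ A, h x = f x) →
        (∀ x : X, sInf (f '' A) ≤ h x ∧ h x ≤ sSup (f '' A)) →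
        (∀ x y : X, d x y < ⊤ → h x = h y) →
        ∀ x : X, gmin x ≤ h x ∧ h x ≤ gmax x) := by
  classical
  have hAne : (f '' A).Nonempty := hA.image f
  have hIle : ∀ a ∈ A, sInf (f '' A) ≤ f a := fun a ha =>
    csInf_le hbddB ⟨a, ha, rfl⟩
  have hleS : ∀ a ∈ A, f a ≤ sSup (f '' A) := fun a ha =>
    le_csSup hbddA ⟨a, ha, rfl⟩
  have hIS : sInf (f '' A) ≤ sSup (f '' A) :=
    csInf_le_csSup hAne hbddB hbddA
  -- finiteness relation facts
  have htrans : ∀ {x y z}, d x y < ⊤ → d y z < ⊤ → d x z < ⊤ := by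
    intro x y z h1 h2
    exact lt_of_le_of_lt (htri x y z) (ENNReal.add_lt_top.2 ⟨h1, h2⟩)
  set P : X → Prop := fun x => ∃ a, a ∈ A ∧ d x a < ⊤ with hP
  -- well-definedness of the f-value on the component
  have hwd : ∀ x, ∀ a ∈ A, ∀ b ∈ A, d x a < ⊤ → d x b < ⊤ → f a = f b := by
    intro x a ha b hb h1 h2
    have : d a b < ⊤ := htrans (by rwa [hsymm]) h2
    exact hconst a ha b hb this
  let gmin : X → ℝ := fun x =>
    if hx : P x then f hx.choose else sInf (f '' A)
  let gmax : X → ℝ := fun x =>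
    if hx : P x then f hx.choose else sSup (f '' A)
  have hgmin : ∀ x, (hx : P x) → ∀ a ∈ A, d x a < ⊤ → gmin x = f a := by
    intro x hx a ha hd
    simp only [gmin, dif_pos hx]
    exact hwd x hx.choose hx.choose_spec.1 a ha hx.choose_spec.2 hd
  have hgmax : ∀ x, (hx : P x) → ∀ a ∈ A, d x a < ⊤ → gmax x = f a := by
    intro x hx a ha hd
    simp only [gmax, dif_pos hx]
    exact hwd x hx.choose hx.choose_spec.1 a ha hx.choose_spec.2 hd
  refine ⟨gmin, gmax, ?_, ?_, ?_, ?_, ?_⟩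
  · intro x hx
    have hPx : P x := ⟨x, hx, by rw [hrefl]; exact ENNReal.zero_lt_top⟩
    exact ⟨hgmin x hPx x hx (by rw [hrefl]; exact ENNReal.zero_lt_top),
      hgmax x hPx x hx (by rw [hrefl]; exact ENNReal.zero_lt_top)⟩
  · intro x
    by_cases hx : P x
    · obtain ⟨a, ha, hd⟩ := hx
      have h1 := hgmin x ⟨a, ha, hd⟩ a ha hd
      have h2 := hgmax x ⟨a, ha, hd⟩ a ha hd
      rw [h1, h2]
      exact ⟨hIle a ha, le_rfl, hleS a ha⟩
    · simp only [gmin, gmax, dif_neg hx]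
      exact ⟨le_rfl, hIS, le_rfl⟩
  · intro x y hd
    by_cases hx : P x
    · obtain ⟨a, ha, hda⟩ := hx
      have hPy : P y := ⟨a, ha, htrans (by rwa [hsymm]) hda⟩
      rw [hgmin x ⟨a, ha, hda⟩ a ha hda, hgmin y hPy a ha (htrans (by rwa [hsymm]) hda)]
    · have hy : ¬ P y := by
        intro ⟨a, ha, hda⟩
        exact hx ⟨a, ha, htrans hd hda⟩
      simp only [gmin, dif_neg hx, dif_neg hy]
  · intro x y hd
    by_cases hx : P x
    · obtain ⟨a, ha, hda⟩ := hx
      have hPy : P y := ⟨a, ha, htrans (by rwa [hsymm]) hda⟩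
      rw [hgmax x ⟨a, ha, hda⟩ a ha hda, hgmax y hPy a ha (htrans (by rwa [hsymm]) hda)]
    · have hy : ¬ P y := by
        intro ⟨a, ha, hda⟩
        exact hx ⟨a, ha, htrans hd hda⟩
      simp only [gmax, dif_neg hx, dif_neg hy]
  · intro h heq hbdd hcst x
    by_cases hx : P x
    · obtain ⟨a, ha, hda⟩ := hx
      have hha : h x = f a := by rw [hcst x a hda, heq a ha]
      rw [hgmin x ⟨a, ha, hda⟩ a ha hda, hgmax x ⟨a, ha, hda⟩ a ha hda, hha]
      exact ⟨le_rfl, le_rfl⟩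
    · simp only [gmin, gmax, dif_neg hx]
      exact hbdd x
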